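/- Let κ > 0 and γ ∈ ℝ, and set p = (2 + κ/2)γ − (κ/2)γ², q = 2p − (1 + κ/2)γ, and β = (κ/2)γ². Then the function G(z₁, z₂) = (1 − z₁)^γ (1 − z₂)^γ (1 − z₁z₂)^{−β}, defined on 𝔻 × 𝔻 using principal branch powers, satisfies 𝒫(D)[G] = 0 at every point of 𝔻 × 𝔻. -/

import Mathlib

/-- The operator `L = z₁∂₁ − z₂∂₂` acting on functions of two complex variables. -/
noncomputable def opL (G : ℂ → ℂ → ℂ) : ℂ → ℂ → ℂ :=
  fun z₁ z₂ => z₁ * deriv (fun w => G w z₂) z₁ - z₂ * deriv (fun w => G z₁ w) z₂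

/-- The two-variable Beliaev–Smirnov type operator `𝒫(D)` with parameters `κ, p, q`:
`𝒫(D)[G] = −(κ/2) L(L G) − ((1+z₁)/(1−z₁)) z₁∂₁G − ((1+z₂)/(1−z₂)) z₂∂₂G
  + (−p/(1−z₁)² − p/(1−z₂)² + q/(1−z₁) + q/(1−z₂) + 2p − 2q) G`. -/
noncomputable def PD (κ p q : ℝ) (G : ℂ → ℂ → ℂ) (z₁ z₂ : ℂ) : ℂ :=
  -(κ / 2 : ℂ) * opL (opL G) z₁ z₂
    - ((1 + z₁) / (1 - z₁)) * (z₁ * deriv (fun w => G w z₂) z₁)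
    - ((1 + z₂) / (1 - z₂)) * (z₂ * deriv (fun w => G z₁ w) z₂)
    + (-(p : ℂ) / (1 - z₁) ^ 2 - (p : ℂ) / (1 - z₂) ^ 2
        + (q : ℂ) / (1 - z₁) + (q : ℂ) / (1 - z₂) + 2 * (p : ℂ) - 2 * (q : ℂ)) * G z₁ z₂

noncomputable def Gf (γ β : ℝ) : ℂ → ℂ → ℂ :=
  fun w₁ w₂ => (1 - w₁) ^ (γ : ℂ) * (1 - w₂) ^ (γ : ℂ) * (1 - w₁ * w₂) ^ (-(β : ℂ))

noncomputable def Uf (γ β : ℝ) (w₁ w₂ : ℂ) : ℂ :=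
  -(γ : ℂ) / (1 - w₁) + (β : ℂ) * w₂ / (1 - w₁ * w₂)

noncomputable def Ff (γ β : ℝ) (w₁ w₂ : ℂ) : ℂ :=
  (w₁ * Uf γ β w₁ w₂ - w₂ * Uf γ β w₂ w₁) * Gf γ β w₁ w₂

noncomputable def Df (γ β : ℝ) (z₁ z₂ : ℂ) : ℂ :=
  (Uf γ β z₁ z₂ + z₁ * (-(γ : ℂ) / (1 - z₁) ^ 2 + (β : ℂ) * z₂ ^ 2 / (1 - z₁ * z₂) ^ 2)
      - z₂ * (β : ℂ) / (1 - z₁ * z₂) ^ 2) * Gf γ β z₁ z₂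
    + (z₁ * Uf γ β z₁ z₂ - z₂ * Uf γ β z₂ z₁) * (Uf γ β z₁ z₂ * Gf γ β z₁ z₂)

lemma Gf_symm (γ β : ℝ) (w₁ w₂ : ℂ) : Gf γ β w₂ w₁ = Gf γ β w₁ w₂ := by
  unfold Gf
  rw [mul_comm w₂ w₁]; ring

lemma Ff_antisymm (γ β : ℝ) (w₁ w₂ : ℂ) : Ff γ β w₂ w₁ = -Ff γ β w₁ w₂ := by
  unfold Ff
  rw [Gf_symm]; ring

lemma re_pos {z : ℂ} (h : ‖z‖ < 1) : 0 < (1 - z).re := by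
  have h1 : z.re ≤ ‖z‖ := Complex.re_le_norm z
  simp [Complex.sub_re]
  linarith

lemma ne_zero_of_re_pos {z : ℂ} (h : 0 < z.re) : z ≠ 0 := by
  intro hz; rw [hz] at h; simp at h

lemma hasDerivAt_Gf (γ β : ℝ) (z₁ z₂ : ℂ) (h₁ : 0 < (1 - z₁).re) (h₂ : 0 < (1 - z₂).re)
    (hc : 0 < (1 - z₁ * z₂).re) :
    HasDerivAt (fun w => Gf γ β w z₂) (Uf γ β z₁ z₂ * Gf γ β z₁ z₂) z₁ := by
  have ha : (1 - z₁) ≠ 0 := ne_zero_of_re_pos h₁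
  have hb : (1 - z₂) ≠ 0 := ne_zero_of_re_pos h₂
  have hcne : (1 - z₁ * z₂) ≠ 0 := ne_zero_of_re_pos hc
  have d1 : HasDerivAt (fun w : ℂ => 1 - w) (-1) z₁ := by
    simpa using (hasDerivAt_id z₁).const_sub 1
  have d2 : HasDerivAt (fun w : ℂ => 1 - w * z₂) (-z₂) z₁ := by
    simpa using ((hasDerivAt_id z₁).mul_const z₂).const_sub 1
  have e1 : HasDerivAt (fun w : ℂ => (1 - w) ^ (γ : ℂ))
      ((γ : ℂ) * (1 - z₁) ^ ((γ : ℂ) - 1) * (-1)) z₁ := d1.cpow_const (Or.inl h₁)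
  have e3 : HasDerivAt (fun w : ℂ => (1 - w * z₂) ^ (-(β : ℂ)))
      ((-(β : ℂ)) * (1 - z₁ * z₂) ^ ((-(β : ℂ)) - 1) * (-z₂)) z₁ := d2.cpow_const (Or.inl hc)
  have H := (e1.mul_const ((1 - z₂) ^ (γ : ℂ))).mul e3
  have hfun : (fun w => Gf γ β w z₂)
      = fun w : ℂ => (1 - w) ^ (γ : ℂ) * (1 - z₂) ^ (γ : ℂ) * (1 - w * z₂) ^ (-(β : ℂ)) := rfl
  rw [hfun]
  refine H.congr_deriv ?_
  rw [Complex.cpow_sub _ _ ha, Complex.cpow_sub _ _ hcne, Complex.cpow_one, Complex.cpow_one]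
  unfold Uf Gf
  field_simp

lemma hasDerivAt_Gf₂ (γ β : ℝ) (z₁ z₂ : ℂ) (h₁ : 0 < (1 - z₁).re) (h₂ : 0 < (1 - z₂).re)
    (hc : 0 < (1 - z₁ * z₂).re) :
    HasDerivAt (fun w => Gf γ β z₁ w) (Uf γ β z₂ z₁ * Gf γ β z₁ z₂) z₂ := by
  have hc' : 0 < (1 - z₂ * z₁).re := by rwa [mul_comm]
  have h := hasDerivAt_Gf γ β z₂ z₁ h₂ h₁ hc'
  have hfun : (fun w => Gf γ β z₁ w) = fun w => Gf γ β w z₁ :=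
    funext fun w => Gf_symm γ β w z₁
  rw [hfun, ← Gf_symm γ β z₁ z₂]
  exact h

lemma hasDerivAt_Ff (γ β : ℝ) (z₁ z₂ : ℂ) (h₁ : 0 < (1 - z₁).re) (h₂ : 0 < (1 - z₂).re)
    (hc : 0 < (1 - z₁ * z₂).re) :
    HasDerivAt (fun w => Ff γ β w z₂) (Df γ β z₁ z₂) z₁ := by
  have ha : (1 - z₁) ≠ 0 := ne_zero_of_re_pos h₁
  have hb : (1 - z₂) ≠ 0 := ne_zero_of_re_pos h₂
  have hcne : (1 - z₁ * z₂) ≠ 0 := ne_zero_of_re_pos hc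
  have hcne' : (1 - z₂ * z₁) ≠ 0 := by rwa [mul_comm]
  have d1 : HasDerivAt (fun w : ℂ => 1 - w) (-1) z₁ := by
    simpa using (hasDerivAt_id z₁).const_sub 1
  have d2 : HasDerivAt (fun w : ℂ => 1 - w * z₂) (-z₂) z₁ := by
    simpa using ((hasDerivAt_id z₁).mul_const z₂).const_sub 1
  have d3 : HasDerivAt (fun w : ℂ => 1 - z₂ * w) (-z₂) z₁ := by
    simpa using ((hasDerivAt_id z₁).const_mul z₂).const_sub 1
  have e1 : HasDerivAt (fun w : ℂ => -(γ : ℂ) / (1 - w)) (-(γ : ℂ) / (1 - z₁) ^ 2) z₁ := by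
    have := (hasDerivAt_const z₁ (-(γ : ℂ))).div d1 ha
    refine this.congr_deriv ?_
    field_simp
    ring
  have e2 : HasDerivAt (fun w : ℂ => (β : ℂ) * z₂ / (1 - w * z₂))
      ((β : ℂ) * z₂ ^ 2 / (1 - z₁ * z₂) ^ 2) z₁ := by
    have := (hasDerivAt_const z₁ ((β : ℂ) * z₂)).div d2 hcne
    refine this.congr_deriv ?_
    field_simp
    ring
  have e3 : HasDerivAt (fun w : ℂ => (β : ℂ) * w / (1 - z₂ * w))
      ((β : ℂ) / (1 - z₁ * z₂) ^ 2) z₁ := by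
    have := ((hasDerivAt_id z₁).const_mul (β : ℂ)).div d3 hcne'
    refine this.congr_deriv ?_
    rw [mul_comm z₂ z₁] at hcne' ⊢
    field_simp
    simp only [id_eq]
    ring
  have hU1 : HasDerivAt (fun w => w * Uf γ β w z₂ - z₂ * Uf γ β z₂ w)
      (Uf γ β z₁ z₂ + z₁ * (-(γ : ℂ) / (1 - z₁) ^ 2 + (β : ℂ) * z₂ ^ 2 / (1 - z₁ * z₂) ^ 2)
        - z₂ * (β : ℂ) / (1 - z₁ * z₂) ^ 2) z₁ := by
    have hL := (hasDerivAt_id z₁).mul (e1.add e2)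
    have hR := ((hasDerivAt_const z₁ (-(γ : ℂ) / (1 - z₂))).add e3).const_mul z₂
    have := hL.sub hR
    have hfun : (fun w => w * Uf γ β w z₂ - z₂ * Uf γ β z₂ w)
        = fun w : ℂ => w * (-(γ : ℂ) / (1 - w) + (β : ℂ) * z₂ / (1 - w * z₂))
            - z₂ * (-(γ : ℂ) / (1 - z₂) + (β : ℂ) * w / (1 - z₂ * w)) := rfl
    rw [hfun]
    refine this.congr_deriv ?_
    simp only [Uf, id_eq, Pi.add_apply]
    ring
  have := hU1.mul (hasDerivAt_Gf γ β z₁ z₂ h₁ h₂ hc)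
  have hfun2 : (fun w => Ff γ β w z₂)
      = fun w => (w * Uf γ β w z₂ - z₂ * Uf γ β z₂ w) * Gf γ β w z₂ := rfl
  rw [hfun2]
  exact this

lemma hasDerivAt_Ff₂ (γ β : ℝ) (z₁ z₂ : ℂ) (h₁ : 0 < (1 - z₁).re) (h₂ : 0 < (1 - z₂).re)
    (hc : 0 < (1 - z₁ * z₂).re) :
    HasDerivAt (fun w => Ff γ β z₁ w) (-Df γ β z₂ z₁) z₂ := by
  have hc' : 0 < (1 - z₂ * z₁).re := by rwa [mul_comm]
  have h := (hasDerivAt_Ff γ β z₂ z₁ h₂ h₁ hc').neg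
  have hfun : (fun w => Ff γ β z₁ w) = fun w => -Ff γ β w z₁ :=
    funext fun w => Ff_antisymm γ β w z₁
  rw [hfun]
  exact h

lemma opL_Gf_eq (γ β : ℝ) {z₁ z₂ : ℂ} (h₁ : ‖z₁‖ < 1) (h₂ : ‖z₂‖ < 1) :
    opL (Gf γ β) z₁ z₂ = Ff γ β z₁ z₂ := by
  have hr₁ := re_pos h₁
  have hr₂ := re_pos h₂
  have hrc : 0 < (1 - z₁ * z₂).re := re_pos (by
    rw [norm_mul]
    calc ‖z₁‖ * ‖z₂‖ ≤ 1 * ‖z₂‖ := by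
          apply mul_le_mul_of_nonneg_right h₁.le (norm_nonneg _)
      _ = ‖z₂‖ := one_mul _
      _ < 1 := h₂)
  unfold opL
  rw [(hasDerivAt_Gf γ β z₁ z₂ hr₁ hr₂ hrc).deriv,
    (hasDerivAt_Gf₂ γ β z₁ z₂ hr₁ hr₂ hrc).deriv]
  unfold Ff
  ring


set_option maxHeartbeats 1000000 in
lemma key_abstract (k g z₁ z₂ A B C u v : ℂ)
    (hA : (1 - z₁) * A = 1) (hB : (1 - z₂) * B = 1) (hC : (1 - z₁ * z₂) * C = 1)
    (hu : u = -g * A + k / 2 * g ^ 2 * z₂ * C)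
    (hv : v = -g * B + k / 2 * g ^ 2 * z₁ * C) :
    -(k / 2) * (z₁ * ((u + z₁ * (-g * A ^ 2 + k / 2 * g ^ 2 * z₂ ^ 2 * C ^ 2)
          - z₂ * (k / 2 * g ^ 2) * C ^ 2) + (z₁ * u - z₂ * v) * u)
        + z₂ * ((v + z₂ * (-g * B ^ 2 + k / 2 * g ^ 2 * z₁ ^ 2 * C ^ 2)
          - z₁ * (k / 2 * g ^ 2) * C ^ 2) + (z₂ * v - z₁ * u) * v))
      - ((1 + z₁) * A) * (z₁ * u) - ((1 + z₂) * B) * (z₂ * v)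
      + (-((2 + k / 2) * g - k / 2 * g ^ 2) * A ^ 2 - ((2 + k / 2) * g - k / 2 * g ^ 2) * B ^ 2 + (2 * ((2 + k / 2) * g - k / 2 * g ^ 2) - (1 + k / 2) * g) * A + (2 * ((2 + k / 2) * g - k / 2 * g ^ 2) - (1 + k / 2) * g) * B
         + 2 * ((2 + k / 2) * g - k / 2 * g ^ 2) - 2 * (2 * ((2 + k / 2) * g - k / 2 * g ^ 2) - (1 + k / 2) * g)) = 0 := by
  subst hu hv
  linear_combination
    ((2 : ℂ) * g + (-3 : ℂ) * g * B + (2 : ℂ) * g * B ^ 2 + (-1 : ℂ) * g * A + (-3 : ℂ) * g * A * B + (2 : ℂ) * g * A * B ^ 2 + (-1 : ℂ) * g * z₂ * B ^ 2 + (-1 : ℂ) * g * z₂ * A * B ^ 2 + (-1 : ℂ) * g * z₂ ^ 2 * B ^ 2 + (-1 : ℂ) * g * z₂ ^ 2 * A * B ^ 2 + (-2 : ℂ) * g * z₁ * A + (3 : ℂ) * g * z₁ * A * B + (-2 : ℂ) * g * z₁ * A * B ^ 2 + (1 : ℂ) * g * z₁ * z₂ * A * B ^ 2 + (1 : ℂ)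 * g * z₁ * z₂ ^ 2 * A * B ^ 2 + ((-1 : ℂ)/2) * k * g * B + ((1 : ℂ)/2) * k * g * B ^ 2 + ((-1 : ℂ)/2) * k * g * A + ((-1 : ℂ)/2) * k * g * A * B + ((1 : ℂ)/2) * k * g * A * B ^ 2 + ((-1 : ℂ)/2) * k * g * z₂ * B + ((-1 : ℂ)/2) * k * g * z₂ * A * B + ((-1 : ℂ)/2) * k * g * z₂ ^ 2 * B ^ 2 + ((-1 : ℂ)/2) * k * g * z₂ ^ 2 * A * B ^ 2 + ((-1 : ℂ)/2) * k * g * z₁ * A + ((1 : ℂ)/2) * k * g * z₁ * A * B + ((-1 : ℂ)/2) * k * g * z₁ * A * B ^ 2 + ((1 : ℂ)/2) * k * g * z₁ * z₂ * A * B + ((1 : ℂ)/2) * k * g * z₁ * z₂ ^ 2 * A * B ^ 2 + (-1 : ℂ) * k * g ^ 2 + (1 : ℂ) * k * g ^ 2 * B + ((-1 : ℂ)/2) * k * g ^ 2 * B ^ 2 + (1 : ℂ) * k * g ^ 2 * A * B + ((-1 : ℂ)/2) * k * g ^ 2 * A * B ^ 2 + ((1 : ℂ)/2) * k * g ^ 2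 * z₂ ^ 2 * B ^ 2 + ((1 : ℂ)/2) * k * g ^ 2 * z₂ ^ 2 * A * B ^ 2 + (1 : ℂ) * k * g ^ 2 * z₁ * A + (-1 : ℂ) * k * g ^ 2 * z₁ * A * B + ((1 : ℂ)/2) * k * g ^ 2 * z₁ * A * B ^ 2 + ((1 : ℂ)/2) * k * g ^ 2 * z₁ * z₂ * B * C + ((1 : ℂ)/2) * k * g ^ 2 * z₁ * z₂ * A * C + (-1 : ℂ) * k * g ^ 2 * z₁ * z₂ * A * B + ((1 : ℂ)/2) * k * g ^ 2 * z₁ * z₂ * A * B * C + ((1 : ℂ)/2) * k * g ^ 2 * z₁ * z₂ ^ 2 * B * C + ((1 : ℂ)/2) * k * g ^ 2 * z₁ * z₂ ^ 2 * A * B * C + ((-1 : ℂ)/2) * k * g ^ 2 * z₁ * z₂ ^ 2 * A * B ^ 2 + ((1 : ℂ)/2) * k * g ^ 2 * z₁ ^ 2 * z₂ * A * C + ((-1 : ℂ)/2) * k * g ^ 2 * z₁ ^ 2 * z₂ * A * B * C + ((-1 : ℂ)/2) * k * g ^ 2 * z₁ ^ 2 * z₂ ^ 2 * A * B * C + ((1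 : ℂ)/2) * k ^ 2 * g ^ 2 * z₁ * z₂ * C + ((-1 : ℂ)/2) * k ^ 2 * g ^ 2 * z₁ * z₂ * C ^ 2 + ((1 : ℂ)/2) * k ^ 2 * g ^ 2 * z₁ * z₂ * A * C + ((-1 : ℂ)/2) * k ^ 2 * g ^ 2 * z₁ * z₂ * A * C ^ 2 + ((-1 : ℂ)/2) * k ^ 2 * g ^ 2 * z₁ ^ 2 * z₂ * A * C + ((1 : ℂ)/2) * k ^ 2 * g ^ 2 * z₁ ^ 2 * z₂ * A * C ^ 2 + ((1 : ℂ)/2) * k ^ 2 * g ^ 2 * z₁ ^ 2 * z₂ ^ 2 * C ^ 2 + ((1 : ℂ)/2) * k ^ 2 * g ^ 2 * z₁ ^ 2 * z₂ ^ 2 * A * C ^ 2 + ((-1 : ℂ)/2) * k ^ 2 * g ^ 2 * z₁ ^ 3 * z₂ ^ 2 * A * C ^ 2) * hA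
    + ((1 : ℂ) * g * A ^ 2 + (-2 : ℂ) * g * A ^ 2 * B + (-1 : ℂ) * g * z₂ * A ^ 2 * B + (-2 : ℂ) * g * z₁ * A ^ 2 + (4 : ℂ) * g * z₁ * A ^ 2 * B + (2 : ℂ) * g * z₁ * z₂ * A ^ 2 * B + (1 : ℂ) * g * z₁ ^ 2 * A ^ 2 + (-2 : ℂ) * g * z₁ ^ 2 * A ^ 2 * B + (-1 : ℂ) * g * z₁ ^ 2 * z₂ * A ^ 2 * B + ((-1 : ℂ)/2) * k * g * A ^ 2 * B + ((-1 : ℂ)/2) * k * g * z₂ * A ^ 2 * B + (1 : ℂ) * k * g * z₁ * A ^ 2 * B + (1 : ℂ) * k * g * z₁ * z₂ * A ^ 2 * B + ((-1 : ℂ)/2) * k * g * z₁ ^ 2 * A ^ 2 * B + ((-1 : ℂ)/2) * k * g * z₁ ^ 2 * z₂ * A ^ 2 * B + ((-1 : ℂ)/2) * k * g ^ 2 * A ^ 2 + ((1 : ℂ)/2) * k * g ^ 2 * A ^ 2 * B + ((1 : ℂ)/2) * k * g ^ 2 * z₂ * A ^ 2 * B + (1 : ℂ) * k * g ^ 2 *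 z₁ * A ^ 2 + (-1 : ℂ) * k * g ^ 2 * z₁ * A ^ 2 * B + ((1 : ℂ)/2) * k * g ^ 2 * z₁ * z₂ * A ^ 2 * C + (-2 : ℂ) * k * g ^ 2 * z₁ * z₂ * A ^ 2 * B + (1 : ℂ) * k * g ^ 2 * z₁ * z₂ * A ^ 2 * B * C + ((-1 : ℂ)/2) * k * g ^ 2 * z₁ ^ 2 * A ^ 2 + ((1 : ℂ)/2) * k * g ^ 2 * z₁ ^ 2 * A ^ 2 * B + ((3 : ℂ)/2) * k * g ^ 2 * z₁ ^ 2 * z₂ * A ^ 2 * B + (-1 : ℂ) * k * g ^ 2 * z₁ ^ 2 * z₂ * A ^ 2 * B * C + (-1 : ℂ) * k * g ^ 2 * z₁ ^ 2 * z₂ ^ 2 * A ^ 2 * B * C + ((-1 : ℂ)/2) * k * g ^ 2 * z₁ ^ 3 * z₂ * A ^ 2 * C + (1 : ℂ) * k * g ^ 2 * z₁ ^ 3 * z₂ ^ 2 * A ^ 2 * B * C + ((1 : ℂ)/2) * k ^ 2 * g ^ 2 * z₁ * z₂ * A ^ 2 * C + ((-1 : ℂ)/2) * k ^ 2 * g ^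 2 * z₁ * z₂ * A ^ 2 * C ^ 2 + ((1 : ℂ)/2) * k ^ 2 * g ^ 2 * z₁ * z₂ * A ^ 2 * B * C + ((-1 : ℂ)/2) * k ^ 2 * g ^ 2 * z₁ * z₂ * A ^ 2 * B * C ^ 2 + ((-1 : ℂ)/2) * k ^ 2 * g ^ 2 * z₁ * z₂ ^ 2 * A ^ 2 * B * C + ((1 : ℂ)/2) * k ^ 2 * g ^ 2 * z₁ * z₂ ^ 2 * A ^ 2 * B * C ^ 2 + (-1 : ℂ) * k ^ 2 * g ^ 2 * z₁ ^ 2 * z₂ * A ^ 2 * C + (1 : ℂ) * k ^ 2 * g ^ 2 * z₁ ^ 2 * z₂ * A ^ 2 * C ^ 2 + (-1 : ℂ) * k ^ 2 * g ^ 2 * z₁ ^ 2 * z₂ * A ^ 2 * B * C + (1 : ℂ) * k ^ 2 * g ^ 2 * z₁ ^ 2 * z₂ * A ^ 2 * B * C ^ 2 + ((1 : ℂ)/2) * k ^ 2 * g ^ 2 * z₁ ^ 2 * z₂ ^ 2 * A ^ 2 * C ^ 2 + (1 : ℂ) * k ^ 2 * g ^ 2 * z₁ ^ 2 * z₂ ^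 2 * A ^ 2 * B * C + ((-1 : ℂ)/2) * k ^ 2 * g ^ 2 * z₁ ^ 2 * z₂ ^ 2 * A ^ 2 * B * C ^ 2 + ((-1 : ℂ)/2) * k ^ 2 * g ^ 2 * z₁ ^ 2 * z₂ ^ 3 * A ^ 2 * B * C ^ 2 + ((1 : ℂ)/2) * k ^ 2 * g ^ 2 * z₁ ^ 3 * z₂ * A ^ 2 * C + ((-1 : ℂ)/2) * k ^ 2 * g ^ 2 * z₁ ^ 3 * z₂ * A ^ 2 * C ^ 2 + ((1 : ℂ)/2) * k ^ 2 * g ^ 2 * z₁ ^ 3 * z₂ * A ^ 2 * B * C + ((-1 : ℂ)/2) * k ^ 2 * g ^ 2 * z₁ ^ 3 * z₂ * A ^ 2 * B * C ^ 2 + (-1 : ℂ) * k ^ 2 * g ^ 2 * z₁ ^ 3 * z₂ ^ 2 * A ^ 2 * C ^ 2 + ((-1 : ℂ)/2) * k ^ 2 * g ^ 2 * z₁ ^ 3 * z₂ ^ 2 * A ^ 2 * B * C + ((-1 : ℂ)/2) * k ^ 2 * g ^ 2 * z₁ ^ 3 * z₂ ^ 2 * A ^ 2 * B * C ^ 2 +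 (1 : ℂ) * k ^ 2 * g ^ 2 * z₁ ^ 3 * z₂ ^ 3 * A ^ 2 * B * C ^ 2 + ((1 : ℂ)/2) * k ^ 2 * g ^ 2 * z₁ ^ 4 * z₂ ^ 2 * A ^ 2 * C ^ 2 + ((1 : ℂ)/2) * k ^ 2 * g ^ 2 * z₁ ^ 4 * z₂ ^ 2 * A ^ 2 * B * C ^ 2 + ((-1 : ℂ)/2) * k ^ 2 * g ^ 2 * z₁ ^ 4 * z₂ ^ 3 * A ^ 2 * B * C ^ 2) * hB
    + ((-1 : ℂ) * k * g ^ 2 * z₁ * z₂ * A ^ 2 * B ^ 2 + (1 : ℂ) * k * g ^ 2 * z₁ * z₂ ^ 2 * A ^ 2 * B ^ 2 + (1 : ℂ) * k * g ^ 2 * z₁ ^ 2 * z₂ * A ^ 2 * B ^ 2 + (-1 : ℂ) * k * g ^ 2 * z₁ ^ 2 * z₂ ^ 2 * A ^ 2 * B ^ 2 + ((1 : ℂ)/2) * k ^ 2 * g ^ 2 * z₁ * z₂ * A ^ 2 * B ^ 2 * C + (-1 : ℂ) * k ^ 2 * g ^ 2 * z₁ * z₂ ^ 2 * A ^ 2 *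 B ^ 2 * C + ((1 : ℂ)/2) * k ^ 2 * g ^ 2 * z₁ * z₂ ^ 3 * A ^ 2 * B ^ 2 * C + (-1 : ℂ) * k ^ 2 * g ^ 2 * z₁ ^ 2 * z₂ * A ^ 2 * B ^ 2 * C + (2 : ℂ) * k ^ 2 * g ^ 2 * z₁ ^ 2 * z₂ ^ 2 * A ^ 2 * B ^ 2 * C + (-1 : ℂ) * k ^ 2 * g ^ 2 * z₁ ^ 2 * z₂ ^ 3 * A ^ 2 * B ^ 2 * C + ((1 : ℂ)/2) * k ^ 2 * g ^ 2 * z₁ ^ 3 * z₂ * A ^ 2 * B ^ 2 * C + (-1 : ℂ) * k ^ 2 * g ^ 2 * z₁ ^ 3 * z₂ ^ 2 * A ^ 2 * B ^ 2 * C + ((1 : ℂ)/2) * k ^ 2 * g ^ 2 * z₁ ^ 3 * z₂ ^ 3 * A ^ 2 * B ^ 2 * C) * hC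


set_option maxHeartbeats 1600000 in
/-- On the integrability parabola `p = (2+κ/2)γ − (κ/2)γ²`, `2p − q = (1+κ/2)γ`,
the function `G(z₁,z₂) = (1−z₁)^γ (1−z₂)^γ (1−z₁z₂)^{−κγ²/2}` (principal branches)
solves `𝒫(D)[G] = 0` on the bidisk. -/
theorem PD_closed_form_solution_on_parabola (κ γ : ℝ) (hκ : 0 < κ) (p q β : ℝ)
    (hp : p = (2 + κ / 2) * γ - (κ / 2) * γ ^ 2)
    (hq : q = 2 * p - (1 + κ / 2) * γ)
    (hβ : β = (κ / 2) * γ ^ 2) :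
    ∀ z₁ ∈ Metric.ball (0:ℂ) 1, ∀ z₂ ∈ Metric.ball (0:ℂ) 1,
      PD κ p q
        (fun w₁ w₂ => (1 - w₁) ^ (γ : ℂ) * (1 - w₂) ^ (γ : ℂ) * (1 - w₁ * w₂) ^ (-(β : ℂ)))
        z₁ z₂ = 0 := by
  intro z₁ hz₁ z₂ hz₂
  rw [Metric.mem_ball, dist_zero_right] at hz₁ hz₂
  have h₁ : ‖z₁‖ < 1 := hz₁
  have h₂ : ‖z₂‖ < 1 := hz₂
  have hr₁ := re_pos h₁
  have hr₂ := re_pos h₂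
  have hrc : 0 < (1 - z₁ * z₂).re := re_pos (by
    rw [norm_mul]
    calc ‖z₁‖ * ‖z₂‖ ≤ 1 * ‖z₂‖ := by
          apply mul_le_mul_of_nonneg_right h₁.le (norm_nonneg _)
      _ = ‖z₂‖ := one_mul _
      _ < 1 := h₂)
  have ha : (1 - z₁) ≠ 0 := ne_zero_of_re_pos hr₁
  have hb : (1 - z₂) ≠ 0 := ne_zero_of_re_pos hr₂
  have hcne : (1 - z₁ * z₂) ≠ 0 := ne_zero_of_re_pos hrc
  show PD κ p q (Gf γ β) z₁ z₂ = 0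
  -- derivative of the opL of Gf, first variable
  have hev1 : (fun w => opL (Gf γ β) w z₂) =ᶠ[nhds z₁] (fun w => Ff γ β w z₂) := by
    filter_upwards [Metric.isOpen_ball.mem_nhds (Metric.mem_ball.mpr (by
      rwa [dist_zero_right]))] with w hw
    rw [Metric.mem_ball, dist_zero_right] at hw
    exact opL_Gf_eq γ β hw h₂
  have hev2 : (fun w => opL (Gf γ β) z₁ w) =ᶠ[nhds z₂] (fun w => Ff γ β z₁ w) := by
    filter_upwards [Metric.isOpen_ball.mem_nhds (Metric.mem_ball.mpr (by
      rwa [dist_zero_right]))] with w hw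
    rw [Metric.mem_ball, dist_zero_right] at hw
    exact opL_Gf_eq γ β h₁ hw
  have hopL2 : opL (opL (Gf γ β)) z₁ z₂ = z₁ * Df γ β z₁ z₂ + z₂ * Df γ β z₂ z₁ := by
    have hout : opL (opL (Gf γ β)) z₁ z₂
        = z₁ * deriv (fun w => opL (Gf γ β) w z₂) z₁
          - z₂ * deriv (fun w => opL (Gf γ β) z₁ w) z₂ := rfl
    rw [hout, hev1.deriv_eq, hev2.deriv_eq,
      (hasDerivAt_Ff γ β z₁ z₂ hr₁ hr₂ hrc).deriv,
      (hasDerivAt_Ff₂ γ β z₁ z₂ hr₁ hr₂ hrc).deriv]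
    ring
  have hβ' : (β : ℂ) = (κ : ℂ) / 2 * (γ : ℂ) ^ 2 := by rw [hβ]; push_cast; ring
  have hp' : (p : ℂ) = (2 + (κ : ℂ) / 2) * (γ : ℂ) - (κ : ℂ) / 2 * (γ : ℂ) ^ 2 := by
    rw [hp]; push_cast; ring
  have hq' : (q : ℂ) = 2 * ((2 + (κ : ℂ) / 2) * (γ : ℂ) - (κ : ℂ) / 2 * (γ : ℂ) ^ 2)
      - (1 + (κ : ℂ) / 2) * (γ : ℂ) := by rw [hq, hp]; push_cast; ring
  have hkey := key_abstract (κ : ℂ) (γ : ℂ) z₁ z₂ (1 - z₁)⁻¹ (1 - z₂)⁻¹ (1 - z₁ * z₂)⁻¹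
      (-(γ : ℂ) / (1 - z₁) + ((κ : ℂ) / 2 * (γ : ℂ) ^ 2) * z₂ / (1 - z₁ * z₂))
      (-(γ : ℂ) / (1 - z₂) + ((κ : ℂ) / 2 * (γ : ℂ) ^ 2) * z₁ / (1 - z₁ * z₂))
      (mul_inv_cancel₀ ha) (mul_inv_cancel₀ hb) (mul_inv_cancel₀ hcne)
      (by ring) (by ring)
  unfold PD
  rw [hopL2, (hasDerivAt_Gf γ β z₁ z₂ hr₁ hr₂ hrc).deriv,
    (hasDerivAt_Gf₂ γ β z₁ z₂ hr₁ hr₂ hrc).deriv]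
  unfold Df Uf
  rw [Gf_symm γ β z₁ z₂]
  rw [show z₂ * z₁ = z₁ * z₂ from mul_comm _ _]
  rw [hβ', hp', hq']
  simp only [div_eq_mul_inv, ← inv_pow] at hkey ⊢
  linear_combination (Gf γ β z₁ z₂) * hkey
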